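/- arXiv:2203.11812 — 3 statements merged into one kernel-verified Lean document; each statement's English description precedes it below -/
import Mathlib

section
/- SLS achievability (converse direction): let F : ℓ^n × ℓ^m → ℓ^n be strictly causal and let Ψ^x : ℓ^n → ℓ^n, Ψ^u : ℓ^n → ℓ^m be causal operators satisfying Ψ^x = F(Ψ^x, Ψ^u) + I. Assume Ψ^x is invertible with causal inverse. Then the causal controller K = Ψ^u ∘ (Ψ^x)^{-1} induces closed-loop maps Φ^x[F,K] = Ψ^x and Φ^u[F,K] = Ψ^u. -/
/-- Sequences of vectors in ℝ^n. -/
abbrev VSeq (n : ℕ) := ℕ → (Fin n → ℝ)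

/-- Causality: the t-th output depends only on inputs up to time t. -/
def Causal {n m : ℕ} (A : VSeq n → VSeq m) : Prop :=
  ∀ x y : VSeq n, ∀ t : ℕ, (∀ s ≤ t, x s = y s) → A x t = A y t

/-- ℓp-stability: a causal operator mapping ℓ_p sequences to ℓ_p sequences. -/
def LpStable {n m : ℕ} (p : ENNReal) (A : VSeq n → VSeq m) : Prop :=
  Causal A ∧ ∀ x : VSeq n, Memℓp x p → Memℓp (A x) p

/-- Strict causality of a two-argument operator: the t-th output depends only
on inputs strictly before time t, and the 0-th output is zero. -/
def StrictCausal2 {n m k : ℕ} (F : VSeq n → VSeq m → VSeq k) : Prop :=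
  (∀ x u, F x u 0 = 0) ∧
  ∀ x x' : VSeq n, ∀ u u' : VSeq m, ∀ t : ℕ,
    (∀ s < t, x s = x' s) → (∀ s < t, u s = u' s) → F x u t = F x' u' t

/-- SLS achievability, converse: if causal (Ψ^x, Ψ^u) satisfy
Ψ^x = F(Ψ^x,Ψ^u) + I and Ψ^x has a causal inverse Ψxinv, then the causal
controller K = Ψ^u ∘ (Ψ^x)⁻¹ induces the closed-loop maps (Ψ^x, Ψ^u): for every
w, the pair (Ψ^x(w), Ψ^u(w)) is the (unique) closed-loop trajectory, and any
closed-loop trajectory of K coincides with it. -/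
theorem achievability_converse
    {n m : ℕ} (F : VSeq n → VSeq m → VSeq n)
    (Ψx : VSeq n → VSeq n) (Ψu : VSeq n → VSeq m)
    (hF : StrictCausal2 F) (hΨx : Causal Ψx) (hΨu : Causal Ψu)
    (hach : ∀ w : VSeq n, Ψx w = fun t => F (Ψx w) (Ψu w) t + w t)
    (Ψxinv : VSeq n → VSeq n) (hinv : Causal Ψxinv)
    (hli : Function.LeftInverse Ψxinv Ψx) (hri : Function.RightInverse Ψxinv Ψx) :
    ∀ w : VSeq n,
      (Ψx w = (fun t => F (Ψx w) (Ψu w) t + w t) ∧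
        Ψu w = (Ψu ∘ Ψxinv) (Ψx w)) ∧
      (∀ x : VSeq n, ∀ u : VSeq m,
        x = (fun t => F x u t + w t) → u = (Ψu ∘ Ψxinv) x →
        x = Ψx w ∧ u = Ψu w) := by
  intro w
  refine ⟨⟨hach w, by rw [Function.comp_apply, hli w]⟩, ?_⟩
  intro x u hx hu
  set v := Ψxinv x with hv
  have hxv : Ψx v = x := hri x
  have hu' : u = Ψu v := hu
  have hvw : v = w := by
    funext t
    have h1 := congrFun (hach v) t
    rw [hxv, ← hu'] at h1
    have h2 := congrFun hx t
    have := h1.symm.trans h2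
    have := add_left_cancel this
    exact this
  constructor
  · rw [← hxv, hvw]
  · rw [hu', hvw]
end

section
/- Completeness of the parametrization (Theorem 2, part 2): let F be strictly causal and K' be strongly ℓp-IS stabilizing (i.e., ℓp-IS stabilizing and K' itself maps ℓ_p^n into ℓ_p^m). Then for any achievable and stable closed-loop pair (Ψ^x, Ψ^u) ∈ CL_p[F], the operator M = −K'(Ψ^x) + Ψ^u lies in L_p, and the controller u = K'(x) + M(w) with w = x − F(x,u) achieves exactly the closed-loop maps (Ψ^x, Ψ^u). -/
/-- Membership in CL_p[F]: (Ψ^x,Ψ^u) are the closed-loop maps of some causal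
controller K for F, and they are ℓp-stable. -/
def InCLp {n m : ℕ} (p : ENNReal) (F : VSeq n → VSeq m → VSeq n)
    (Ψx : VSeq n → VSeq n) (Ψu : VSeq n → VSeq m) : Prop :=
  (∃ K : VSeq n → VSeq m, Causal K ∧ ∀ w : VSeq n,
      Ψx w = (fun t => F (Ψx w) (Ψu w) t + w t) ∧ Ψu w = K (Ψx w)) ∧
  (∀ w : VSeq n, Memℓp w p → Memℓp (Ψx w) p ∧ Memℓp (Ψu w) p)

/-- Theorem 2, part 2: if K' is strongly ℓp-IS stabilizing, then
for any (Ψ^x,Ψ^u) ∈ CL_p[F], the operator M = −K'(Ψ^x) + Ψ^u lies in L_p, and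
the controller u = K'(x) + M(w), with w = x − F(x,u), achieves exactly the
closed-loop maps (Ψ^x,Ψ^u). -/
theorem parametrization_completeness
    {n m : ℕ} (p : ENNReal) (F : VSeq n → VSeq m → VSeq n)
    (K' : VSeq n → VSeq m)
    (hF : StrictCausal2 F) (hK' : Causal K')
    (hIS : ∀ (w : VSeq n) (v : VSeq m) (x : VSeq n) (u : VSeq m),
      x = (fun t => F x u t + w t) → u = (fun t => K' x t + v t) →
      Memℓp w p → Memℓp v p → Memℓp x p ∧ Memℓp u p)
    (hK'lp : ∀ x : VSeq n, Memℓp x p → Memℓp (K' x) p)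
    (Ψx : VSeq n → VSeq n) (Ψu : VSeq n → VSeq m)
    (hΨ : InCLp p F Ψx Ψu) :
    LpStable p (fun w => fun t => -K' (Ψx w) t + Ψu w t) ∧
    (∀ w : VSeq n,
      Ψx w = (fun t => F (Ψx w) (Ψu w) t + w t) ∧
      Ψu w = (fun t => K' (Ψx w) t +
        (fun w' => fun t' => -K' (Ψx w') t' + Ψu w' t')
          (fun s => Ψx w s - F (Ψx w) (Ψu w) s) t) ∧
      (∀ (x : VSeq n) (u : VSeq m),
        x = (fun t => F x u t + w t) →
        u = (fun t => K' x t +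
          (fun w' => fun t' => -K' (Ψx w') t' + Ψu w' t')
            (fun s => x s - F x u s) t) →
        x = Ψx w ∧ u = Ψu w)) := by
  obtain ⟨⟨K, hKc, hKeq⟩, hstab⟩ := hΨ
  -- causality of w ↦ (Ψx w, Ψu w)
  have key : ∀ w w' : VSeq n, ∀ t : ℕ, (∀ s ≤ t, w s = w' s) →
      ∀ s, s ≤ t → Ψx w s = Ψx w' s ∧ Ψu w s = Ψu w' s := by
    intro w w' t hw s
    induction s using Nat.strong_induction_on with
    | _ s ih =>
      intro hst
      have hx : Ψx w s = Ψx w' s := by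
        have e1 := congrFun (hKeq w).1 s
        have e2 := congrFun (hKeq w').1 s
        rw [e1, e2, hw s hst,
          hF.2 (Ψx w) (Ψx w') (Ψu w) (Ψu w') s
            (fun r hr => (ih r hr (le_of_lt (lt_of_lt_of_le hr hst))).1)
            (fun r hr => (ih r hr (le_of_lt (lt_of_lt_of_le hr hst))).2)]
      refine ⟨hx, ?_⟩
      rw [congrFun (hKeq w).2 s, congrFun (hKeq w').2 s]
      exact hKc (Ψx w) (Ψx w') s (fun r hr => by
        rcases lt_or_eq_of_le hr with h | h
        · exact (ih r h (h.le.trans hst)).1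
        · rw [h]; exact hx)
  constructor
  · constructor
    · intro w w' t hw
      have h1 : K' (Ψx w) t = K' (Ψx w') t :=
        hK' (Ψx w) (Ψx w') t (fun s hs => (key w w' t hw s hs).1)
      have h2 : Ψu w t = Ψu w' t := (key w w' t hw t le_rfl).2
      simp only [h1, h2]
    · intro w hw
      have h := hstab w hw
      have h1 : Memℓp (fun t => -K' (Ψx w) t) p := (hK'lp (Ψx w) h.1).neg
      exact h1.add h.2
  · intro w
    have hw1 := (hKeq w).1
    have hww' : (fun s => Ψx w s - F (Ψx w) (Ψu w) s) = w := by
      funext s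
      have := congrFun hw1 s
      rw [this]; abel
    refine ⟨hw1, ?_, ?_⟩
    · rw [hww']
      funext t
      simp only []
      abel
    · intro x u hx hu
      have hwd : (fun s => x s - F x u s) = w := by
        funext s
        have := congrFun hx s
        rw [this]; abel
      rw [hwd] at hu
      have main : ∀ t, x t = Ψx w t ∧ u t = Ψu w t := by
        intro t
        induction t using Nat.strong_induction_on with
        | _ t ih =>
          have hxt : x t = Ψx w t := by
            rw [congrFun hx t, congrFun hw1 t,
              hF.2 x (Ψx w) u (Ψu w) t (fun s hs => (ih s hs).1)
                (fun s hs => (ih s hs).2)]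
          refine ⟨hxt, ?_⟩
          have hKx : K' x t = K' (Ψx w) t :=
            hK' x (Ψx w) t (fun s hs => by
              rcases lt_or_eq_of_le hs with h | h
              · exact (ih s h).1
              · rw [h]; exact hxt)
          rw [congrFun hu t]
          simp only [hKx]
          abel
      exact ⟨funext fun t => (main t).1, funext fun t => (main t).2⟩
end

section
/- Inductive step of the completeness proof: let F be strictly causal and let (Ψ^x, Ψ^u) satisfy the achievability equation Ψ^x = F(Ψ^x, Ψ^u) + I. Let (Φ^x, Φ^u) be the closed-loop maps of the controller u = K'(x) + M(w), where M = −K'(Ψ^x) + Ψ^u and w = x − F(x,u). If Φ^x_i = Ψ^x_i and Φ^u_i = Ψ^u_i for all i ≤ j, then Φ^x_{j+1} = Ψ^x_{j+1} and Φ^u_{j+1} = Ψ^u_{j+1}. -/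
/-- inductive step of the completeness proof: with
M = −K'(Ψ^x) + Ψ^u and (Φ^x,Φ^u) the closed-loop maps of the controller
u = K'(x) + M(w), w = x − F(x,u), if the closed-loop maps agree with (Ψ^x,Ψ^u)
componentwise up to time j, then they also agree at time j+1. -/
theorem completeness_inductive_step
    {n m : ℕ} (F : VSeq n → VSeq m → VSeq n) (K' : VSeq n → VSeq m)
    (hF : StrictCausal2 F) (hK' : Causal K')
    (Ψx : VSeq n → VSeq n) (Ψu : VSeq n → VSeq m)
    (hΨx : Causal Ψx) (hΨu : Causal Ψu)
    (hach : ∀ w : VSeq n, Ψx w = fun t => F (Ψx w) (Ψu w) t + w t)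
    (M : VSeq n → VSeq m)
    (hM : M = fun w => fun t => -K' (Ψx w) t + Ψu w t)
    (Φx : VSeq n → VSeq n) (Φu : VSeq n → VSeq m)
    (hCL : ∀ w : VSeq n,
      Φx w = (fun t => F (Φx w) (Φu w) t + w t) ∧
      Φu w = (fun t => K' (Φx w) t +
        M (fun s => Φx w s - F (Φx w) (Φu w) s) t))
    (w : VSeq n) (j : ℕ)
    (hind : ∀ i ≤ j, Φx w i = Ψx w i ∧ Φu w i = Ψu w i) :
    Φx w (j + 1) = Ψx w (j + 1) ∧ Φu w (j + 1) = Ψu w (j + 1) := by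
  obtain ⟨hCLx, hCLu⟩ := hCL w
  have hw' : (fun s => Φx w s - F (Φx w) (Φu w) s) = w := by
    funext s
    have := congrFun hCLx s
    simp [this]
  have hxj1 : Φx w (j + 1) = Ψx w (j + 1) := by
    have hFeq : F (Φx w) (Φu w) (j + 1) = F (Ψx w) (Ψu w) (j + 1) :=
      hF.2 _ _ _ _ _ (fun s hs => (hind s (Nat.lt_succ_iff.mp hs)).1)
        (fun s hs => (hind s (Nat.lt_succ_iff.mp hs)).2)
    rw [congrFun hCLx (j+1), hFeq, ← congrFun (hach w) (j+1)]
  refine ⟨hxj1, ?_⟩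
  have hKeq : K' (Φx w) (j + 1) = K' (Ψx w) (j + 1) :=
    hK' _ _ _ (fun s hs => by
      rcases Nat.lt_succ_iff_lt_or_eq.mp (Nat.lt_succ_of_le hs) with h | h
      · exact (hind s (Nat.lt_succ_iff.mp h)).1
      · rw [h]; exact hxj1)
  rw [congrFun hCLu (j+1), hw', hM]
  simp [hKeq]
end
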